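/- Let N ≥ 1 be an integer. For all real numbers a and b, ∫_{−∞}^{∞} e^{−N x²/2} h̃_{N−1}(x + a) h̃_N(x + b) dx = Σ_{k=0}^{N−1} N^k a^k b^{k+1} · N! / ((N−k−1)! k! (k+1)!). -/

import Mathlib

open MeasureTheory Real Filter Finset
open scoped ContDiff Topology

/-- Hermite polynomials with parameter `N`. -/
noncomputable def hermN (N k : ℕ) (x : ℝ) : ℝ :=
  (-1 : ℝ) ^ k * Real.exp (N * x ^ 2 / 2) *
    iteratedDeriv k (fun y : ℝ => Real.exp (-(N * y ^ 2) / 2)) x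

/-- Normalized Hermite polynomials. -/
noncomputable def htilde (N k : ℕ) (x : ℝ) : ℝ :=
  hermN N k x / Real.sqrt (k.factorial * N ^ k * Real.sqrt (2 * Real.pi / N))

namespace HermAux

/-- The Gaussian. -/
noncomputable def G (N : ℕ) (x : ℝ) : ℝ := Real.exp (-(N * x ^ 2) / 2)

lemma G_pos (N : ℕ) (x : ℝ) : 0 < G N x := Real.exp_pos _

lemma contDiff_G (N : ℕ) : ContDiff ℝ ∞ (G N) := by
  have h : ContDiff ℝ ∞ (fun x : ℝ => -((N : ℝ) * x ^ 2) / 2) := by fun_prop (disch := norm_num)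
  exact h.exp

lemma contDiff_iterG (N k : ℕ) : ContDiff ℝ ∞ (iteratedDeriv k (G N)) := by
  rw [iteratedDeriv_eq_iterate]
  exact ContDiff.iterate_deriv k (contDiff_G N)

lemma G_mul_hermN (N k : ℕ) (x : ℝ) :
    G N x * hermN N k x = (-1 : ℝ) ^ k * iteratedDeriv k (G N) x := by
  have h : Real.exp (-((N : ℝ) * x ^ 2) / 2) * Real.exp ((N : ℝ) * x ^ 2 / 2) = 1 := by
    rw [← Real.exp_add]; ring_nf; exact Real.exp_zero
  calc G N x * hermN N k x
      = (Real.exp (-((N : ℝ) * x ^ 2) / 2) * Real.exp ((N : ℝ) * x ^ 2 / 2)) *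
        ((-1 : ℝ) ^ k * iteratedDeriv k (G N) x) := by unfold hermN G; ring
    _ = (-1 : ℝ) ^ k * iteratedDeriv k (G N) x := by rw [h, one_mul]

lemma contDiff_hermN (N k : ℕ) : ContDiff ℝ ∞ (hermN N k) := by
  have h1 : ContDiff ℝ ∞ (fun x : ℝ => Real.exp ((N : ℝ) * x ^ 2 / 2)) := by
    have h : ContDiff ℝ ∞ (fun x : ℝ => (N : ℝ) * x ^ 2 / 2) := by fun_prop (disch := norm_num)
    exact h.exp
  exact (contDiff_const.mul h1).mul (contDiff_iterG N k)

lemma hermN_zero (N : ℕ) (x : ℝ) : hermN N 0 x = 1 := by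
  have := G_mul_hermN N 0 x
  simp only [pow_zero, one_mul, iteratedDeriv_zero] at this
  have hg := (G_pos N x).ne'
  field_simp [G] at this ⊢
  nlinarith [this, G_pos N x]

lemma hasDerivAt_G_mul (N k : ℕ) (x : ℝ) :
    HasDerivAt (fun y => G N y * hermN N k y) (-(G N x * hermN N (k + 1) x)) x := by
  have hfun : (fun y => G N y * hermN N k y)
      = fun y => (-1 : ℝ) ^ k * iteratedDeriv k (G N) y := funext (G_mul_hermN N k)
  rw [hfun]
  have hd : HasDerivAt (iteratedDeriv k (G N)) (iteratedDeriv (k + 1) (G N) x) x := by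
    rw [iteratedDeriv_succ]
    exact (((contDiff_iterG N k).differentiable (by simp)) x).hasDerivAt
  have h2 := hd.const_mul ((-1 : ℝ) ^ k)
  refine h2.congr_deriv ?_
  rw [G_mul_hermN N (k + 1) x, pow_succ]
  ring

end HermAux

namespace HermAux2
open HermAux

lemma hermN_eq (N k : ℕ) (x : ℝ) :
    hermN N k x = Real.exp ((N : ℝ) * x ^ 2 / 2) * ((-1 : ℝ) ^ k * iteratedDeriv k (G N) x) := by
  unfold hermN G; ring

lemma hasDerivAt_hermN (N k : ℕ) (x : ℝ) :
    HasDerivAt (hermN N k) ((N : ℝ) * x * hermN N k x - hermN N (k + 1) x) x := by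
  have hfun : hermN N k
      = fun y => Real.exp ((N : ℝ) * y ^ 2 / 2) * ((-1 : ℝ) ^ k * iteratedDeriv k (G N) y) :=
    funext (hermN_eq N k)
  have hd : HasDerivAt (fun y => (-1 : ℝ) ^ k * iteratedDeriv k (G N) y)
      ((-1 : ℝ) ^ k * iteratedDeriv (k + 1) (G N) x) x := by
    have hd0 : HasDerivAt (iteratedDeriv k (G N)) (iteratedDeriv (k + 1) (G N) x) x := by
      rw [iteratedDeriv_succ]
      exact (((contDiff_iterG N k).differentiable (by simp)) x).hasDerivAt
    exact hd0.const_mul _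
  have hE : HasDerivAt (fun y : ℝ => Real.exp ((N : ℝ) * y ^ 2 / 2))
      (Real.exp ((N : ℝ) * x ^ 2 / 2) * ((N : ℝ) * x)) x := by
    have h1 : HasDerivAt (fun y : ℝ => (N : ℝ) * y ^ 2 / 2) ((N : ℝ) * x) x := by
      have := ((hasDerivAt_pow 2 x).const_mul (N : ℝ)).div_const 2
      exact this.congr_deriv (by ring)
    exact h1.exp
  have hprod := hE.fun_mul hd
  rw [← hfun] at hprod
  refine hprod.congr_deriv ?_
  have e1 := hermN_eq N k x
  have e2 := hermN_eq N (k + 1) x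
  rw [show ((-1:ℝ))^(k+1) = -(-1:ℝ)^k by rw [pow_succ]; ring] at e2
  rw [e1, e2]; ring

lemma hermN_succ_fun (N k : ℕ) :
    hermN N (k + 1) = fun x => (N : ℝ) * x * hermN N k x - deriv (hermN N k) x := by
  funext x
  have h := (hasDerivAt_hermN N k x).deriv
  linarith [h]

lemma deriv_hermN_aux (N : ℕ) :
    ∀ k, (∀ x, deriv (hermN N k) x = (N : ℝ) * k * hermN N (k - 1) x)
      ∧ (∀ x, deriv (hermN N (k + 1)) x = (N : ℝ) * (k + 1) * hermN N k x) := by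
  intro k
  induction k with
  | zero =>
    constructor
    · intro x
      have h0 : hermN N 0 = fun _ : ℝ => (1 : ℝ) := funext (hermN_zero N)
      rw [h0]; simp
    · intro x
      have h1 : hermN N 1 = fun x : ℝ => (N : ℝ) * x := by
        rw [hermN_succ_fun]
        funext y
        have h0 : hermN N 0 = fun _ : ℝ => (1 : ℝ) := funext (hermN_zero N)
        rw [h0]
        simp
      rw [h1]
      rw [deriv_const_mul_field]
      rw [hermN_zero]
      simp
  | succ k ih =>
    constructor
    · intro x
      have h := ih.2 x
      simp only [Nat.add_sub_cancel, Nat.cast_add, Nat.cast_one]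
      exact h
    · intro x
      have e1 : hermN N (k + 1 + 1)
          = fun y => (N : ℝ) * y * hermN N (k + 1) y - (N : ℝ) * ((k : ℝ) + 1) * hermN N k y := by
        rw [hermN_succ_fun]
        funext y
        rw [ih.2 y]
      have h2 : HasDerivAt (hermN N (k + 1)) ((N : ℝ) * ((k : ℝ) + 1) * hermN N k x) x := by
        have h := ((contDiff_hermN N (k + 1)).differentiable (by simp) x).hasDerivAt
        rwa [ih.2 x] at h
      have hA : HasDerivAt (fun y : ℝ => (N : ℝ) * y * hermN N (k + 1) y)
          ((N : ℝ) * hermN N (k + 1) x + (N : ℝ) * x * ((N : ℝ) * ((k : ℝ) + 1) * hermN N k x))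
          x := by
        have h1 : HasDerivAt (fun y : ℝ => (N : ℝ) * y) (N : ℝ) x := by
          simpa using (hasDerivAt_id x).const_mul (N : ℝ)
        have hm := h1.fun_mul h2
        convert hm using 1 <;> ring
      have hB : HasDerivAt (fun y : ℝ => (N : ℝ) * ((k : ℝ) + 1) * hermN N k y)
          ((N : ℝ) * ((k : ℝ) + 1) * deriv (hermN N k) x) x :=
        (((contDiff_hermN N k).differentiable (by simp) x).hasDerivAt).const_mul _
      have hdd := hA.fun_sub hB
      rw [← e1] at hdd
      rw [hdd.deriv, (hasDerivAt_hermN N k x).deriv]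
      push_cast; ring

lemma deriv_hermN (N k : ℕ) (x : ℝ) :
    deriv (hermN N k) x = (N : ℝ) * k * hermN N (k - 1) x := (deriv_hermN_aux N k).1 x

lemma hasDerivAt_hermN' (N k : ℕ) (x : ℝ) :
    HasDerivAt (hermN N k) ((N : ℝ) * k * hermN N (k - 1) x) x := by
  have h := ((contDiff_hermN N k).differentiable (by simp) x).hasDerivAt
  rwa [deriv_hermN] at h

lemma exists_poly (N k : ℕ) : ∃ p : Polynomial ℝ, ∀ x, hermN N k x = p.eval x := by
  induction k with
  | zero => exact ⟨1, fun x => by simp [hermN_zero]⟩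
  | succ k ih =>
    obtain ⟨p, hp⟩ := ih
    refine ⟨Polynomial.C (N : ℝ) * Polynomial.X * p - Polynomial.derivative p, fun x => ?_⟩
    have h1 : hermN N (k + 1) x = (N : ℝ) * x * hermN N k x - deriv (hermN N k) x := by
      rw [hermN_succ_fun]
    have h2 : deriv (hermN N k) x = Polynomial.eval x (Polynomial.derivative p) := by
      have hfp : hermN N k = fun y => p.eval y := funext hp
      rw [hfp]
      exact (Polynomial.hasDerivAt p x).deriv
    rw [h1, hp, h2]
    simp

end HermAux2

namespace HermAux3
open HermAux HermAux2 Polynomial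

lemma G_eq (N : ℕ) (x : ℝ) : G N x = Real.exp (-((N : ℝ) / 2) * x ^ 2) := by
  unfold G; ring_nf

lemma integrable_pow_G {N : ℕ} (hN : 0 < N) (n : ℕ) :
    Integrable (fun x : ℝ => x ^ n * G N x) := by
  have hb : (0 : ℝ) < (N : ℝ) / 2 := by positivity
  have hs : (-1 : ℝ) < (n : ℝ) := lt_of_lt_of_le (by norm_num) (Nat.cast_nonneg n)
  have h := integrable_rpow_mul_exp_neg_mul_sq hb hs
  have heq : (fun x : ℝ => x ^ n * G N x)
      = fun x : ℝ => x ^ (n : ℝ) * Real.exp (-((N : ℝ) / 2) * x ^ 2) := by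
    funext x; rw [Real.rpow_natCast, G_eq]
  rw [heq]; exact h

lemma integrable_eval_G {N : ℕ} (hN : 0 < N) (p : Polynomial ℝ) :
    Integrable (fun x : ℝ => p.eval x * G N x) := by
  induction p using Polynomial.induction_on' with
  | add p q hp hq =>
    have := hp.add hq
    simp only [eval_add, add_mul]
    exact this
  | monomial n a =>
    simp only [eval_monomial]
    have := (integrable_pow_G hN n).const_mul a
    simpa [mul_assoc] using this

lemma tendsto_pow_G {N : ℕ} (hN : 0 < N) (n : ℕ) :
    Tendsto (fun x : ℝ => x ^ n * G N x) (cocompact ℝ) (𝓝 0) := by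
  have hb : (0 : ℝ) < (N : ℝ) / 2 := by positivity
  have h := tendsto_rpow_abs_mul_exp_neg_mul_sq_cocompact hb (n : ℝ)
  refine squeeze_zero_norm ?_ h
  intro x
  rw [norm_mul, G_eq, norm_pow, Real.norm_eq_abs, Real.norm_eq_abs,
    abs_of_pos (Real.exp_pos _), Real.rpow_natCast]

lemma tendsto_eval_G {N : ℕ} (hN : 0 < N) (p : Polynomial ℝ) :
    Tendsto (fun x : ℝ => p.eval x * G N x) (cocompact ℝ) (𝓝 0) := by
  induction p using Polynomial.induction_on' with
  | add p q hp hq =>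
    have h := hp.add hq
    simp only [eval_add, add_mul]
    simpa using h
  | monomial n a =>
    simp only [eval_monomial]
    have h := (tendsto_pow_G hN n).const_mul a
    simp only [mul_zero] at h
    simpa [mul_assoc] using h

lemma integrable_GHH {N : ℕ} (hN : 0 < N) (j k : ℕ) :
    Integrable (fun x => G N x * hermN N j x * hermN N k x) := by
  obtain ⟨p, hp⟩ := exists_poly N j
  obtain ⟨q, hq⟩ := exists_poly N k
  have heq : (fun x => G N x * hermN N j x * hermN N k x)
      = fun x => (p * q).eval x * G N x := by
    funext x; rw [hp, hq, eval_mul]; ring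
  rw [heq]; exact integrable_eval_G hN (p * q)

lemma integral_step {N : ℕ} (hN : 0 < N) (j k : ℕ) :
    (∫ x : ℝ, G N x * hermN N (j + 1) x * hermN N k x)
      = (N : ℝ) * k * ∫ x : ℝ, G N x * hermN N j x * hermN N (k - 1) x := by
  set F : ℝ → ℝ := fun x => G N x * hermN N j x * hermN N k x with hF
  set F' : ℝ → ℝ := fun x =>
    -(G N x * hermN N (j + 1) x) * hermN N k x
      + G N x * hermN N j x * ((N : ℝ) * k * hermN N (k - 1) x) with hF'def
  have hF' : ∀ x, HasDerivAt F (F' x) x := fun x =>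
    (hasDerivAt_G_mul N j x).mul (hasDerivAt_hermN' N k x)
  have hone : Integrable (fun x => G N x * hermN N (j + 1) x * hermN N k x) :=
    integrable_GHH hN (j + 1) k
  have htwo : Integrable (fun x => G N x * hermN N j x * hermN N (k - 1) x) :=
    integrable_GHH hN j (k - 1)
  have hint : Integrable F' := by
    have h := hone.neg.add (htwo.const_mul ((N : ℝ) * k))
    have heq : F' = fun x => -(G N x * hermN N (j + 1) x * hermN N k x)
        + ((N : ℝ) * k) * (G N x * hermN N j x * hermN N (k - 1) x) := by
      funext x; simp only [hF'def]; ring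
    rw [heq]; exact h
  have hco : Tendsto F (cocompact ℝ) (𝓝 0) := by
    obtain ⟨p, hp⟩ := exists_poly N j
    obtain ⟨q, hq⟩ := exists_poly N k
    have heq : F = fun x => (p * q).eval x * G N x := by
      funext x; simp only [hF, hp, hq, eval_mul]; ring
    rw [heq]; exact tendsto_eval_G hN (p * q)
  rw [cocompact_eq_atBot_atTop] at hco
  have hbot : Tendsto F atBot (𝓝 0) := hco.mono_left le_sup_left
  have htop : Tendsto F atTop (𝓝 0) := hco.mono_left le_sup_right
  have h0 : ∫ x, F' x = 0 - 0 := integral_of_hasDerivAt_of_tendsto hF' hint hbot htop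
  have hsplit : ∫ x, F' x = (- ∫ x, G N x * hermN N (j + 1) x * hermN N k x)
      + ((N : ℝ) * k) * ∫ x, G N x * hermN N j x * hermN N (k - 1) x := by
    have hi1 : Integrable (fun x : ℝ => -(G N x * hermN N (j + 1) x * hermN N k x)) :=
      hone.neg
    have hi2 : Integrable
        (fun x : ℝ => ((N : ℝ) * k) * (G N x * hermN N j x * hermN N (k - 1) x)) :=
      htwo.const_mul _
    have heq : F' = fun x => -(G N x * hermN N (j + 1) x * hermN N k x)
        + ((N : ℝ) * k) * (G N x * hermN N j x * hermN N (k - 1) x) := by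
      funext x; simp only [hF'def]; ring
    rw [heq, integral_add hi1 hi2, integral_neg, MeasureTheory.integral_const_mul]
  rw [hsplit] at h0
  linarith

lemma integral_G {N : ℕ} (hN : 0 < N) : ∫ x : ℝ, G N x = Real.sqrt (2 * π / N) := by
  have h := integral_gaussian ((N : ℝ) / 2)
  have heq : (fun x : ℝ => Real.exp (-((N : ℝ) / 2) * x ^ 2)) = G N := by
    funext x; rw [G_eq]
  rw [heq] at h
  rw [h]
  congr 1
  rw [div_div_eq_mul_div]
  ring

lemma orth {N : ℕ} (hN : 0 < N) : ∀ j k : ℕ,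
    (∫ x : ℝ, G N x * hermN N j x * hermN N k x)
      = if j = k then (j.factorial : ℝ) * (N : ℝ) ^ j * Real.sqrt (2 * π / N) else 0 := by
  intro j
  induction j with
  | zero =>
    intro k
    cases k with
    | zero =>
      have heq : (fun x => G N x * hermN N 0 x * hermN N 0 x) = fun x => G N x := by
        funext x; rw [hermN_zero]; ring
      rw [heq, integral_G hN]
      simp
    | succ m =>
      have heq : (fun x => G N x * hermN N 0 x * hermN N (m + 1) x)
          = fun x => G N x * hermN N (m + 1) x * hermN N 0 x := by
        funext x; ring
      rw [heq, integral_step hN m 0]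
      simp
  | succ j ih =>
    intro k
    cases k with
    | zero =>
      rw [integral_step hN j 0]
      simp
    | succ m =>
      rw [integral_step hN j (m + 1)]
      simp only [Nat.add_sub_cancel]
      rw [ih m]
      by_cases hjm : j = m
      · subst hjm
        rw [if_pos rfl, if_pos rfl]
        rw [Nat.factorial_succ]
        push_cast
        ring
      · rw [if_neg hjm, if_neg (by omega)]
        ring

end HermAux3

namespace HermAux4
open HermAux HermAux2

lemma add_formula (N : ℕ) : ∀ (n : ℕ) (x a : ℝ),
    hermN N n (x + a) = ∑ i ∈ Finset.range (n + 1),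
      ((n.choose i : ℝ) * (N : ℝ) ^ i * hermN N (n - i) x) * a ^ i := by
  intro n
  induction n with
  | zero =>
    intro x a
    simp [hermN_zero]
  | succ n ih =>
    intro x a
    set c : ℕ → ℝ := fun i => ((n + 1).choose i : ℝ) * (N : ℝ) ^ i * hermN N (n + 1 - i) x
      with hc
    set L : ℝ → ℝ := fun t => hermN N (n + 1) (x + t) with hL
    set R : ℝ → ℝ := fun t => ∑ i ∈ Finset.range (n + 2), c i * t ^ i with hR
    have hLd : ∀ t : ℝ, HasDerivAt L ((N : ℝ) * (n + 1) * hermN N n (x + t)) t := by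
      intro t
      have h1 : HasDerivAt (fun s : ℝ => x + s) 1 t := by
        simpa using (hasDerivAt_id t).const_add x
      have h2 := (hasDerivAt_hermN' N (n + 1) (x + t)).comp t h1
      simp only [Nat.add_sub_cancel, mul_one] at h2
      refine h2.congr_deriv ?_
      push_cast; ring
    have hRd : ∀ t : ℝ, HasDerivAt R (∑ i ∈ Finset.range (n + 2), c i * (i * t ^ (i - 1))) t := by
      intro t
      exact HasDerivAt.fun_sum fun i _ => (hasDerivAt_pow i t).const_mul (c i)
    have hderiv_eq : ∀ t : ℝ,
        (∑ i ∈ Finset.range (n + 2), c i * (i * t ^ (i - 1)))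
          = (N : ℝ) * (n + 1) * hermN N n (x + t) := by
      intro t
      rw [ih x t, Finset.sum_range_succ' (fun i => c i * (i * t ^ (i - 1))) (n + 1)]
      simp only [Nat.cast_zero, zero_mul, mul_zero, add_zero, pow_zero]
      rw [Finset.mul_sum]
      refine Finset.sum_congr rfl fun i hi => ?_
      have hch : (n + 1) * n.choose i = (n + 1).choose (i + 1) * (i + 1) :=
        Nat.add_one_mul_choose_eq n i
      have hch' : ((n + 1).choose (i + 1) : ℝ) * (i + 1) = (n + 1) * (n.choose i : ℝ) := by
        exact_mod_cast (hch.symm)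
      simp only [hc, Nat.add_sub_cancel, Nat.succ_sub_succ, Nat.sub_zero]
      push_cast
      linear_combination ((N : ℝ) ^ (i + 1) * hermN N (n - i) x * t ^ i) * hch'
    have hdiff : Differentiable ℝ (fun t => L t - R t) := fun t =>
      ((hLd t).sub (hRd t)).differentiableAt
    have hd0 : ∀ t : ℝ, deriv (fun t => L t - R t) t = 0 := by
      intro t
      rw [((hLd t).fun_sub (hRd t)).deriv, hderiv_eq t]
      ring
    have hconst := is_const_of_deriv_eq_zero hdiff hd0 a 0
    have hL0 : L 0 = hermN N (n + 1) x := by simp [hL]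
    have hR0 : R 0 = hermN N (n + 1) x := by
      have hthis : R 0 = ∑ i ∈ Finset.range (n + 2), c i * (0 : ℝ) ^ i := rfl
      rw [hthis, Finset.sum_eq_single_of_mem 0 (Finset.mem_range.mpr (Nat.succ_pos _))]
      · simp [hc]
      · intro i _ hi
        simp [zero_pow hi]
    have : L a - R a = 0 := by rw [hconst, hL0, hR0]; ring
    have hfin : L a = R a := by linarith
    simpa [hL, hR] using hfin

end HermAux4

namespace HermMain
open HermAux HermAux2 HermAux3 HermAux4

theorem main (N : ℕ) (hN : 1 ≤ N) (a b : ℝ) :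
    (∫ x : ℝ, Real.exp (-(N * x ^ 2) / 2) * htilde N (N - 1) (x + a) * htilde N N (x + b)) =
      ∑ k ∈ Finset.range N,
        (N : ℝ) ^ k * a ^ k * b ^ (k + 1) * N.factorial /
          ((N - k - 1).factorial * k.factorial * (k + 1).factorial) := by
  obtain ⟨M, rfl⟩ : ∃ M, N = M + 1 := ⟨N - 1, by omega⟩
  clear hN
  have hNpos : 0 < M + 1 := Nat.succ_pos M
  set s : ℝ := Real.sqrt (2 * π / (M + 1 : ℕ)) with hs
  have hspos : 0 < s := by
    rw [hs]; apply Real.sqrt_pos.mpr; positivity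
  set c1 : ℝ := Real.sqrt ((M.factorial : ℝ) * ((M + 1 : ℕ) : ℝ) ^ M * s) with hc1
  set c2 : ℝ := Real.sqrt (((M + 1).factorial : ℝ) * ((M + 1 : ℕ) : ℝ) ^ (M + 1) * s) with hc2
  have hc1c2 : c1 * c2 = (M.factorial : ℝ) * ((M + 1 : ℕ) : ℝ) ^ (M + 1) * s := by
    rw [hc1, hc2, ← Real.sqrt_mul (by positivity)]
    have heq : (M.factorial : ℝ) * ((M + 1 : ℕ) : ℝ) ^ M * s
          * (((M + 1).factorial : ℝ) * ((M + 1 : ℕ) : ℝ) ^ (M + 1) * s)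
        = ((M.factorial : ℝ) * ((M + 1 : ℕ) : ℝ) ^ (M + 1) * s) ^ 2 := by
      have hfact : ((M + 1).factorial : ℝ) = ((M + 1 : ℕ) : ℝ) * (M.factorial : ℝ) := by
        push_cast [Nat.factorial_succ]; ring
      have hpow : ((M + 1 : ℕ) : ℝ) ^ (M + 1) = ((M + 1 : ℕ) : ℝ) ^ M * ((M + 1 : ℕ) : ℝ) :=
        pow_succ _ _
      rw [hfact, hpow]; ring
    rw [heq, Real.sqrt_sq (by positivity)]
  -- step 1: rewrite integrand in terms of hermN
  have hconv : ∀ x : ℝ,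
      Real.exp (-((M + 1 : ℕ) * x ^ 2) / 2) * htilde (M + 1) (M + 1 - 1) (x + a)
          * htilde (M + 1) (M + 1) (x + b)
      = (G (M + 1) x * hermN (M + 1) M (x + a) * hermN (M + 1) (M + 1) (x + b)) / (c1 * c2) := by
    intro x
    have hG : Real.exp (-(((M + 1 : ℕ) : ℝ) * x ^ 2) / 2) = G (M + 1) x := rfl
    unfold htilde
    rw [hG]
    have hM : M + 1 - 1 = M := by omega
    rw [hM, hc1, hc2]
    ring
  rw [show (fun x : ℝ => Real.exp (-((M + 1 : ℕ) * x ^ 2) / 2)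
        * htilde (M + 1) (M + 1 - 1) (x + a) * htilde (M + 1) (M + 1) (x + b))
      = fun x : ℝ => (G (M + 1) x * hermN (M + 1) M (x + a) * hermN (M + 1) (M + 1) (x + b))
        / (c1 * c2) from funext hconv]
  rw [MeasureTheory.integral_div]
  -- step 2: expand via the addition formula
  have hexp : ∀ x : ℝ, G (M + 1) x * hermN (M + 1) M (x + a) * hermN (M + 1) (M + 1) (x + b)
      = ∑ i ∈ Finset.range (M + 1), ∑ j ∈ Finset.range (M + 2),
          (((M.choose i : ℝ) * ((M + 1 : ℕ) : ℝ) ^ i * a ^ i)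
            * (((M + 1).choose j : ℝ) * ((M + 1 : ℕ) : ℝ) ^ j * b ^ j))
          * (G (M + 1) x * hermN (M + 1) (M - i) x * hermN (M + 1) (M + 1 - j) x) := by
    intro x
    rw [add_formula (M + 1) M x a, add_formula (M + 1) (M + 1) x b,
      Finset.mul_sum (Finset.range (M + 1))
        (fun i => (M.choose i : ℝ) * ((M + 1 : ℕ) : ℝ) ^ i * hermN (M + 1) (M - i) x * a ^ i)
        (G (M + 1) x),
      Finset.sum_mul_sum]
    refine Finset.sum_congr rfl fun i hi => Finset.sum_congr rfl fun j hj => ?_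
    ring
  have hint1 : ∀ i j : ℕ, Integrable (fun x : ℝ =>
      (((M.choose i : ℝ) * ((M + 1 : ℕ) : ℝ) ^ i * a ^ i)
        * (((M + 1).choose j : ℝ) * ((M + 1 : ℕ) : ℝ) ^ j * b ^ j))
      * (G (M + 1) x * hermN (M + 1) (M - i) x * hermN (M + 1) (M + 1 - j) x)) :=
    fun i j => (integrable_GHH hNpos _ _).const_mul _
  have hI : (∫ x : ℝ, G (M + 1) x * hermN (M + 1) M (x + a) * hermN (M + 1) (M + 1) (x + b))
      = ∑ i ∈ Finset.range (M + 1),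
          ((M.choose i : ℝ) * ((M + 1 : ℕ) : ℝ) ^ i * a ^ i)
            * (((M + 1).choose (i + 1) : ℝ) * ((M + 1 : ℕ) : ℝ) ^ (i + 1) * b ^ (i + 1))
            * (((M - i).factorial : ℝ) * ((M + 1 : ℕ) : ℝ) ^ (M - i)
                * Real.sqrt (2 * π / (M + 1 : ℕ))) := by
    rw [show (fun x : ℝ => G (M + 1) x * hermN (M + 1) M (x + a)
          * hermN (M + 1) (M + 1) (x + b))
        = fun x : ℝ => ∑ i ∈ Finset.range (M + 1), ∑ j ∈ Finset.range (M + 2),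
          (((M.choose i : ℝ) * ((M + 1 : ℕ) : ℝ) ^ i * a ^ i)
            * (((M + 1).choose j : ℝ) * ((M + 1 : ℕ) : ℝ) ^ j * b ^ j))
          * (G (M + 1) x * hermN (M + 1) (M - i) x * hermN (M + 1) (M + 1 - j) x)
        from funext hexp]
    rw [MeasureTheory.integral_finset_sum _
      (fun i _ => integrable_finset_sum _ (fun j _ => hint1 i j))]
    refine Finset.sum_congr rfl fun i hi => ?_
    rw [MeasureTheory.integral_finset_sum _ (fun j _ => hint1 i j)]
    have hmem : i + 1 ∈ Finset.range (M + 2) := by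
      rw [Finset.mem_range] at hi ⊢; omega
    rw [Finset.sum_eq_single_of_mem (i + 1) hmem]
    · rw [MeasureTheory.integral_const_mul, orth hNpos]
      rw [Finset.mem_range] at hi
      rw [if_pos (by omega : M - i = M + 1 - (i + 1))]
    · intro j hj hne
      rw [MeasureTheory.integral_const_mul, orth hNpos]
      rw [Finset.mem_range] at hi hj
      rw [if_neg (by omega : ¬ M - i = M + 1 - j)]
      ring
  rw [hI, hc1c2, Finset.sum_div]
  refine Finset.sum_congr rfl fun i hi => ?_
  rw [Finset.mem_range] at hi
  have hi' : i ≤ M := by omega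
  have hNi1 : M + 1 - i - 1 = M - i := by omega
  rw [hNi1, ← hs]
  have h1 : (M.choose i : ℝ) * (i.factorial : ℝ) * ((M - i).factorial : ℝ)
      = (M.factorial : ℝ) := by
    exact_mod_cast congrArg (Nat.cast : ℕ → ℝ) (Nat.choose_mul_factorial_mul_factorial hi')
  have h2 : ((M + 1).choose (i + 1) : ℝ) * ((i + 1).factorial : ℝ) * ((M - i).factorial : ℝ)
      = ((M + 1).factorial : ℝ) := by
    have hle : i + 1 ≤ M + 1 := by omega
    have h := Nat.choose_mul_factorial_mul_factorial hle
    have hsub : M + 1 - (i + 1) = M - i := by omega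
    rw [hsub] at h
    exact_mod_cast congrArg (Nat.cast : ℕ → ℝ) h
  have h12 : ((M.choose i : ℝ) * (i.factorial : ℝ) * ((M - i).factorial : ℝ))
      * (((M + 1).choose (i + 1) : ℝ) * ((i + 1).factorial : ℝ) * ((M - i).factorial : ℝ))
      = (M.factorial : ℝ) * ((M + 1).factorial : ℝ) := by rw [h1, h2]
  have hpow : ((M + 1 : ℕ) : ℝ) ^ i * ((M + 1 : ℕ) : ℝ) ^ (i + 1) * ((M + 1 : ℕ) : ℝ) ^ (M - i)
      = ((M + 1 : ℕ) : ℝ) ^ (M + 1) * ((M + 1 : ℕ) : ℝ) ^ i := by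
    rw [← pow_add, ← pow_add, ← pow_add]
    congr 1
    omega
  have hD1 : (M.factorial : ℝ) * ((M + 1 : ℕ) : ℝ) ^ (M + 1) * s ≠ 0 := by positivity
  have hD2 : (((M - i).factorial : ℝ)) * (i.factorial : ℝ) * ((i + 1).factorial : ℝ) ≠ 0 := by
    positivity
  rw [div_eq_div_iff hD1 hD2]
  linear_combination (a ^ i * b ^ (i + 1) * s
      * (((M + 1 : ℕ) : ℝ) ^ i * ((M + 1 : ℕ) : ℝ) ^ (i + 1) * ((M + 1 : ℕ) : ℝ) ^ (M - i))) * h12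
    + (a ^ i * b ^ (i + 1) * s * (M.factorial : ℝ) * (((M + 1).factorial : ℝ))) * hpow

end HermMain

theorem hermite_cross_integral (N : ℕ) (hN : 1 ≤ N) (a b : ℝ) :
    (∫ x : ℝ, Real.exp (-(N * x ^ 2) / 2) * htilde N (N - 1) (x + a) * htilde N N (x + b)) =
      ∑ k ∈ Finset.range N,
        (N : ℝ) ^ k * a ^ k * b ^ (k + 1) * N.factorial /
          ((N - k - 1).factorial * k.factorial * (k + 1).factorial) := by
  exact HermMain.main N hN a b
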